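/- Each of the three smooth vector fields v₁(x,y,w) = (1,0,0), v₂(x,y,w) = (0,1,0), and v₃(x,y,w) = (y, x, 1) on ℝ³ is an infinitesimal symmetry of the hyperbolic system Σ_H; hence so is every real linear combination a·v₃ + b·v₁ + c·v₂ with a,b,c ∈ ℝ. -/

import Mathlib

open Real Set

/-- The state space ℝ³ with coordinates (x, y, w). -/
abbrev V3 : Type := Fin 3 → ℝ

/-- Lie bracket of vector fields: [v,u](ξ) = Du(ξ)·v(ξ) − Dv(ξ)·u(ξ). -/
noncomputable def lieBr (v u : V3 → V3) : V3 → V3 :=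
  fun ξ => fderiv ℝ u ξ (v ξ) - fderiv ℝ v ξ (u ξ)

/-- `v` is an infinitesimal symmetry of the control-affine system `(f, g)` on `U`. -/
def InfSymmOn (U : Set V3) (f g v : V3 → V3) : Prop :=
  ∀ ξ ∈ U, (∃ c : ℝ, lieBr v g ξ = c • g ξ) ∧ (∃ c : ℝ, lieBr v f ξ = c • g ξ)

/-- The control vector field g₀ = ∂/∂w. -/
def g0 : V3 → V3 := fun _ => ![0, 0, 1]

/-- Drift of the hyperbolic system Σ_H. -/
noncomputable def fH : V3 → V3 := fun ξ => ![Real.cosh (ξ 2), Real.sinh (ξ 2), 0]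

noncomputable def pr (i : Fin 3) : V3 →L[ℝ] ℝ := ContinuousLinearMap.proj i

lemma hfH (ξ : V3) : HasFDerivAt fH
    (ContinuousLinearMap.pi ![Real.sinh (ξ 2) • pr 2, Real.cosh (ξ 2) • pr 2, 0]) ξ := by
  rw [hasFDerivAt_pi']
  intro i
  fin_cases i <;>
    simp only [fH, ContinuousLinearMap.proj_pi, Matrix.cons_val_zero, Matrix.cons_val_one,
      Matrix.head_cons, Matrix.cons_val_two, Matrix.tail_cons, Fin.isValue]
  · exact ((pr 2).hasFDerivAt).cosh
  · exact ((pr 2).hasFDerivAt).sinh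
  · exact hasFDerivAt_const _ _

lemma hv3 (ξ : V3) : HasFDerivAt (fun ξ : V3 => ![ξ 1, ξ 0, (1:ℝ)])
    (ContinuousLinearMap.pi ![pr 1, pr 0, 0]) ξ := by
  rw [hasFDerivAt_pi']
  intro i
  fin_cases i <;>
    simp only [ContinuousLinearMap.proj_pi, Matrix.cons_val_zero, Matrix.cons_val_one,
      Matrix.head_cons, Matrix.cons_val_two, Matrix.tail_cons, Fin.isValue]
  · exact (pr 1).hasFDerivAt
  · exact (pr 0).hasFDerivAt
  · exact hasFDerivAt_const _ _

lemma hvabc (a b c : ℝ) (ξ : V3) :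
    HasFDerivAt (fun ξ : V3 => a • ![ξ 1, ξ 0, (1:ℝ)] + b • ![(1:ℝ), 0, 0] + c • ![(0:ℝ), 1, 0])
      (ContinuousLinearMap.pi ![a • pr 1, a • pr 0, 0]) ξ := by
  rw [hasFDerivAt_pi']
  intro i
  fin_cases i <;>
    simp [ContinuousLinearMap.proj_pi, smul_eq_mul]
  · exact ((pr 1).hasFDerivAt.const_smul a)
  · exact ((pr 0).hasFDerivAt.const_smul a)
  · exact hasFDerivAt_const _ _

lemma hg0fd (ξ : V3) : fderiv ℝ g0 ξ = 0 := fderiv_const_apply _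

/-- v₁ = (1,0,0), v₂ = (0,1,0), v₃ = (y,x,1) are infinitesimal symmetries
of Σ_H, and hence so is every real linear combination a·v₃ + b·v₁ + c·v₂. -/
theorem symmetries_of_hyperbolic :
    InfSymmOn univ fH g0 (fun _ => ![1, 0, 0]) ∧
    InfSymmOn univ fH g0 (fun _ => ![0, 1, 0]) ∧
    InfSymmOn univ fH g0 (fun ξ => ![ξ 1, ξ 0, 1]) ∧
    ∀ a b c : ℝ,
      InfSymmOn univ fH g0
        (fun ξ => a • ![ξ 1, ξ 0, 1] + b • ![(1:ℝ), 0, 0] + c • ![(0:ℝ), 1, 0]) := by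

  refine ⟨?_, ?_, ?_, ?_⟩
  · refine fun ξ _ => ⟨⟨0, ?_⟩, ⟨0, ?_⟩⟩ <;>
    · funext i
      fin_cases i <;>
        simp [lieBr, g0, hg0fd, (hfH ξ).fderiv, fderiv_const_apply,
          ContinuousLinearMap.pi_apply, pr]
  · refine fun ξ _ => ⟨⟨0, ?_⟩, ⟨0, ?_⟩⟩ <;>
    · funext i
      fin_cases i <;>
        simp [lieBr, g0, hg0fd, (hfH ξ).fderiv, fderiv_const_apply,
          ContinuousLinearMap.pi_apply, pr]
  · refine fun ξ _ => ⟨⟨0, ?_⟩, ⟨0, ?_⟩⟩ <;>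
    · funext i
      fin_cases i <;>
        simp [lieBr, g0, fH, hg0fd, (hfH ξ).fderiv, (hv3 ξ).fderiv,
          ContinuousLinearMap.pi_apply, pr]
  · intro a b c
    refine fun ξ _ => ⟨⟨0, ?_⟩, ⟨0, ?_⟩⟩ <;>
    · funext i
      simp only [lieBr, hg0fd, (hfH ξ).fderiv, (hvabc a b c ξ).fderiv]
      fin_cases i <;>
        simp [g0, fH, ContinuousLinearMap.pi_apply, pr, mul_comm]
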